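/- Suppose Φ : ℝⁿ → ℝ≥0 is a C¹, positive definite and proper function which is a control Lyapunov function for the system ẋ = F(x,u), i.e., for every x ≠ 0 there exists a vector u ∈ ℝ^ℓ with DΦ(x)·F(x,u) < 0. Then for every constant σ > 0 and every x ≠ 0 there exist a time τ = τ(x) ∈ (0, σ] and a (constant) control u_x : [0, τ] → ℝ^ℓ such that the corresponding trajectory satisfies Φ(π(t, 0, x, u_x)) < Φ(x) for all t ∈ (0, τ]; in particular, conditions (2.7a,b) are fulfilled with β(s) = s, namely Φ(π(τ, 0, x, u_x)) < Φ(x) and Φ(π(t, 0, x, u_x)) ≤ Φ(x) for all t ∈ [0, τ]. -/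

import Mathlib

open MeasureTheory Filter Set Topology

noncomputable section

/-- If `Φ` is a `C¹`, positive definite, proper control Lyapunov function for
`ẋ = F(x,u)`, then for every `σ > 0` and every `x ≠ 0` there exist `τ ∈ (0,σ]` and a
constant control `u` such that the corresponding trajectory satisfies
`Φ(π(t)) < Φ(x)` for all `t ∈ (0,τ]`; in particular (2.7a,b) hold with `β(s) = s`. -/
theorem clf_implies_decrease {n l : ℕ}
    (F : EuclideanSpace ℝ (Fin n) → EuclideanSpace ℝ (Fin l) → EuclideanSpace ℝ (Fin n))
    (hFlip : ∃ K : NNReal, LipschitzWith K (Function.uncurry F))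
    (hF0 : F 0 0 = 0)
    (Φ : EuclideanSpace ℝ (Fin n) → ℝ)
    (hΦC1 : ContDiff ℝ 1 Φ)
    (hΦ0 : Φ 0 = 0) (hΦpos : ∀ x : EuclideanSpace ℝ (Fin n), x ≠ 0 → 0 < Φ x)
    (hΦproper : ∀ c : ℝ, IsCompact {x : EuclideanSpace ℝ (Fin n) | Φ x ≤ c})
    (hCLF : ∀ x : EuclideanSpace ℝ (Fin n), x ≠ 0 →
      ∃ u : EuclideanSpace ℝ (Fin l), fderiv ℝ Φ x (F x u) < 0) :
    ∀ σ > (0:ℝ), ∀ x : EuclideanSpace ℝ (Fin n), x ≠ 0 →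
      ∃ τ ∈ Set.Ioc (0:ℝ) σ, ∃ u : EuclideanSpace ℝ (Fin l),
      ∃ π : ℝ → EuclideanSpace ℝ (Fin n),
        π 0 = x ∧
        (∀ t ∈ Set.Icc (0:ℝ) τ, π t = x + ∫ r in (0:ℝ)..t, F (π r) u) ∧
        (∀ t ∈ Set.Ioc (0:ℝ) τ, Φ (π t) < Φ x) ∧
        -- in particular, (2.7a,b) with β(s) = s:
        Φ (π τ) < Φ x ∧
        (∀ t ∈ Set.Icc (0:ℝ) τ, Φ (π t) ≤ Φ x) := by
  intro σ hσ x hx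
  obtain ⟨K, hK⟩ := hFlip
  obtain ⟨u, hu⟩ := hCLF x hx
  -- Lipschitz in the state variable for fixed control u
  have hKu : LipschitzWith K (fun y => F y u) := by
    have := hK.comp (LipschitzWith.prodMk_right u (α := EuclideanSpace ℝ (Fin n)))
    rw [mul_one] at this
    exact this
  -- set up Picard-Lindelöf data
  set C : ℝ := ‖F x u‖ + K + 1 with hC
  have hCpos : 0 < C := by positivity
  have hnorm : ∀ y ∈ Metric.closedBall x 1, ‖F y u‖ ≤ C := by
    intro y hy
    have h1 : ‖F y u - F x u‖ ≤ K * ‖y - x‖ := by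
      have := hKu.dist_le_mul y x
      simpa [dist_eq_norm] using this
    have h2 : ‖y - x‖ ≤ 1 := by
      have := Metric.mem_closedBall.mp hy
      simpa [dist_eq_norm] using this
    have h3 : ‖F y u‖ ≤ ‖F y u - F x u‖ + ‖F x u‖ := by
      have := norm_add_le (F y u - F x u) (F x u); simpa using this
    calc ‖F y u‖ ≤ ‖F y u - F x u‖ + ‖F x u‖ := h3
      _ ≤ K * 1 + ‖F x u‖ := by
          gcongr
          exact h1.trans (by nlinarith [K.coe_nonneg])
      _ ≤ C := by simp [hC]; nlinarith
  set ε : ℝ := min σ (1 / C) with hε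
  have hε0 : 0 < ε := lt_min hσ (by positivity)
  have hεσ : ε ≤ σ := min_le_left _ _
  have hpl : IsPicardLindelof (fun _ y => F y u) (tmin := 0) (tmax := ε) ⟨0, ⟨le_rfl, hε0.le⟩⟩
      x 1 0 ⟨C, hCpos.le⟩ K :=
    { lipschitzOnWith := fun _ _ => hKu.lipschitzOnWith
      continuousOn := fun _ _ => continuousOn_const
      norm_le := fun _ _ y hy => hnorm y (by simpa using hy)
      mul_max_le := by
        have hmax : max (ε - 0) (0 - 0) = ε := by
          rw [sub_zero, sub_zero]; exact max_eq_left hε0.le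
        change C * max (ε - 0) (0 - 0) ≤ (1:ℝ) - 0
        rw [hmax, sub_zero]
        calc C * ε ≤ C * (1 / C) := by gcongr; exact min_le_right _ _
          _ = 1 := by field_simp }
  obtain ⟨f, hf0, hfderiv⟩ : ∃ f : ℝ → EuclideanSpace ℝ (Fin n), f 0 = x ∧
      ∀ t ∈ Icc (0:ℝ) ε, HasDerivWithinAt f (F (f t) u) (Icc 0 ε) t :=
    hpl.exists_eq_forall_mem_Icc_hasDerivWithinAt₀
  -- derivative of Φ ∘ f
  have hΦdiff : Differentiable ℝ Φ := hΦC1.differentiable one_ne_zero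
  have hgderiv : ∀ t ∈ Icc (0:ℝ) ε,
      HasDerivWithinAt (fun s => Φ (f s)) (fderiv ℝ Φ (f t) (F (f t) u)) (Icc 0 ε) t := by
    intro t ht
    exact (hΦdiff (f t)).hasFDerivAt.comp_hasDerivWithinAt t (hfderiv t ht)
  have hg0 : HasDerivWithinAt (fun s => Φ (f s)) (fderiv ℝ Φ x (F x u)) (Icc 0 ε) 0 := by
    have := hgderiv 0 ⟨le_rfl, hε0.le⟩
    rwa [hf0] at this
  -- slope argument: for small t > 0, Φ (f t) < Φ x
  have hslope : Tendsto (slope (fun s => Φ (f s)) 0) (𝓝[>] 0) (𝓝 (fderiv ℝ Φ x (F x u))) := by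
    have h := hasDerivWithinAt_iff_tendsto_slope.mp hg0
    rwa [Icc_diff_left, nhdsWithin_Ioc_eq_nhdsGT hε0] at h
  have hev : ∀ᶠ t in 𝓝[>] (0:ℝ), slope (fun s => Φ (f s)) 0 t < 0 :=
    hslope.eventually (Filter.Tendsto.eventually_lt_const hu tendsto_id)
  obtain ⟨δ, hδ0, hδ⟩ := mem_nhdsGT_iff_exists_Ioc_subset.mp hev
  have hδ0' : (0:ℝ) < δ := hδ0
  set τ : ℝ := min δ ε with hτ
  have hτ0 : 0 < τ := lt_min hδ0' hε0
  have hτε : τ ≤ ε := min_le_right _ _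
  have hτδ : τ ≤ δ := min_le_left _ _
  have hdec : ∀ t ∈ Ioc (0:ℝ) τ, Φ (f t) < Φ x := by
    intro t ht
    have hts : t ∈ Ioc (0:ℝ) δ := ⟨ht.1, ht.2.trans hτδ⟩
    have := hδ hts
    rw [mem_setOf_eq, slope_def_field] at this
    have ht0 : (0:ℝ) < t - 0 := by linarith [ht.1]
    have := (div_neg_iff.mp this).resolve_left (fun h => absurd h.2 (not_lt.mpr ht0.le))
    rw [hf0] at this
    linarith [this.1]
  -- continuity of f on Icc 0 ε
  have hfc : ContinuousOn f (Icc 0 ε) := fun t ht => (hfderiv t ht).continuousWithinAt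
  -- integral equation
  have hint : ∀ t ∈ Icc (0:ℝ) τ, f t = x + ∫ r in (0:ℝ)..t, F (f r) u := by
    intro t ht
    have htε : Icc (0:ℝ) t ⊆ Icc 0 ε := Icc_subset_Icc le_rfl (ht.2.trans hτε)
    have hcont : ContinuousOn f (Icc 0 t) := hfc.mono htε
    have hderiv' : ∀ r ∈ Ioo (0:ℝ) t, HasDerivWithinAt f (F (f r) u) (Ioi r) r := by
      intro r hr
      have hrε : r ∈ Ioo (0:ℝ) ε := ⟨hr.1, lt_of_lt_of_le hr.2 (ht.2.trans hτε)⟩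
      exact ((hfderiv r (Ioo_subset_Icc_self hrε)).hasDerivAt
        (Icc_mem_nhds hrε.1 hrε.2)).hasDerivWithinAt
    have hintble : IntervalIntegrable (fun r => F (f r) u) volume 0 t := by
      apply ContinuousOn.intervalIntegrable
      rw [uIcc_of_le ht.1]
      exact hK.continuous.comp_continuousOn (hcont.prodMk continuousOn_const)
    have := intervalIntegral.integral_eq_sub_of_hasDeriv_right_of_le ht.1 hcont hderiv' hintble
    rw [this, hf0]
    abel
  refine ⟨τ, ⟨hτ0, hτε.trans hεσ⟩, u, f, hf0, hint, hdec, hdec τ ⟨hτ0, le_rfl⟩, ?_⟩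
  intro t ht
  rcases eq_or_lt_of_le ht.1 with h | h
  · rw [← h, hf0]
  · exact (hdec t ⟨h, ht.2⟩).le
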